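/- Under hypotheses (γ), (φ_hyp), and (F0), the functional φ(u) = ∑_{t=1}^T [ γ₁(t)Φ₁(Δu₁(t)) + γ₂(t)Φ₂(Δu₂(t)) + γ₃(t)Φ₃(u₁(t)) + γ₄(t)Φ₄(u₂(t)) − F(t,u₁(t),u₂(t)) ] satisfies φ(u) → +∞ as ‖u₁‖_∞ + ‖u₂‖_∞ → ∞; that is, for every M > 0 there exists R > 0 such that ‖u₁‖_∞ + ‖u₂‖_∞ ≥ R implies φ(u) ≥ M. In particular φ is bounded below on E. -/

import Mathlib

/- STATEMENT 14: under (γ), (φ_hyp) and (F0), the functional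
`φ(u) = ∑_{t=1}^T [γ₁(t)Φ₁(Δu₁) + γ₂(t)Φ₂(Δu₂) + γ₃(t)Φ₃(u₁) + γ₄(t)Φ₄(u₂) − F(t,u₁,u₂)]`
satisfies `φ(u) → +∞` as `‖u₁‖_∞ + ‖u₂‖_∞ → ∞`; in particular `φ` is bounded below on `E`. -/

noncomputable section

abbrev Rn (N : ℕ) := EuclideanSpace ℝ (Fin N)

/-- `u : ℤ → ℝ^N` is `T`-periodic. -/
def IsPeriodic (N : ℕ) (T : ℕ) (u : ℤ → Rn N) : Prop := ∀ t : ℤ, u (t + T) = u t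

/-- Forward difference. -/
def fdiff (N : ℕ) (u : ℤ → Rn N) (t : ℤ) : Rn N := u (t + 1) - u t

/-- `‖w‖_∞ = max_{t∈ℤ[1,T]} |w(t)|` (for `T ≥ 1`). -/
def supNorm (N T : ℕ) (hT : 1 ≤ T) (w : ℤ → Rn N) : ℝ :=
  (Finset.Icc (1 : ℤ) (T : ℤ)).sup'
    (Finset.nonempty_Icc.mpr (by exact_mod_cast hT)) (fun t => ‖w t‖)

/-- The action functional of Theorem 1.2. -/
def phiFun (N T : ℕ) (γ : Fin 4 → ℤ → ℝ) (Φv : Fin 4 → Rn N → ℝ)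
    (F : ℤ → Rn N → Rn N → ℝ) (u : (ℤ → Rn N) × (ℤ → Rn N)) : ℝ :=
  ∑ t ∈ Finset.Icc (1 : ℤ) (T : ℤ),
    (γ 0 t * Φv 0 (fdiff N u.1 t) + γ 1 t * Φv 1 (fdiff N u.2 t)
      + γ 2 t * Φv 2 (u.1 t) + γ 3 t * Φv 3 (u.2 t) - F t (u.1 t) (u.2 t))

/-- Elementary absorption lemma: a lower-order power term can be absorbed
into half of the leading power term, at the cost of a constant. -/
lemma halve_rpow {c H α e : ℝ} (hc : 0 < c) (hH : 0 ≤ H) (hα : 0 ≤ α) (hαe : α < e) :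
    ∃ K, 0 ≤ K ∧ ∀ s : ℝ, 0 ≤ s → c / 2 * s ^ e - K ≤ c * s ^ e - H * s ^ α := by
  set S : ℝ := max 1 ((2 * H / c) ^ (e - α)⁻¹) with hSdef
  have hS1 : (1 : ℝ) ≤ S := le_max_left _ _
  have hS0 : (0 : ℝ) < S := lt_of_lt_of_le one_pos hS1
  refine ⟨H * S ^ α, by positivity, fun s hs => ?_⟩
  rcases le_or_gt s S with h | h
  · have h1 : H * s ^ α ≤ H * S ^ α :=
      mul_le_mul_of_nonneg_left (Real.rpow_le_rpow hs h hα) hH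
    nlinarith [Real.rpow_nonneg hs e]
  · have hsp : 0 < s := hS0.trans h
    have hbase : (0:ℝ) ≤ 2 * H / c := by positivity
    have h2 : 2 * H / c ≤ s ^ (e - α) := by
      calc 2 * H / c = ((2 * H / c) ^ (e - α)⁻¹) ^ (e - α) :=
            (Real.rpow_inv_rpow hbase (by linarith)).symm
        _ ≤ s ^ (e - α) :=
            Real.rpow_le_rpow (Real.rpow_nonneg hbase _)
              (le_trans (le_max_right _ _) h.le) (by linarith)
    have h3 : H ≤ c / 2 * s ^ (e - α) := by
      have := mul_le_mul_of_nonneg_left h2 (le_of_lt (by linarith : (0:ℝ) < c / 2))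
      calc H = c / 2 * (2 * H / c) := by field_simp
        _ ≤ c / 2 * s ^ (e - α) := this
    have h4 : H * s ^ α ≤ c / 2 * s ^ e := by
      have := mul_le_mul_of_nonneg_right h3 (Real.rpow_nonneg hs α)
      calc H * s ^ α ≤ c / 2 * s ^ (e - α) * s ^ α := this
        _ = c / 2 * s ^ e := by
            rw [mul_assoc, ← Real.rpow_add hsp]; ring_nf
    have hK : 0 ≤ H * S ^ α := by positivity
    linarith

theorem phi_coercive_and_bounded_below (T N : ℕ) (hT : 1 < T)
    (γ : Fin 4 → ℤ → ℝ) (φv : Fin 4 → Rn N → Rn N) (Φv : Fin 4 → Rn N → ℝ)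
    (F : ℤ → Rn N → Rn N → ℝ)
    (p q : ℝ) (a b : Fin 4 → ℝ)
    (hp : 1 < p) (hq : 1 < q) (ha : ∀ i, 0 < a i) (hb : ∀ i, 0 < b i)
    -- hypothesis (γ)
    (hγper : ∀ i, ∀ t : ℤ, γ i (t + T) = γ i t)
    (hγpos : ∀ i, ∀ t ∈ Finset.Icc (1 : ℤ) (T : ℤ), 0 < γ i t)
    -- hypothesis (φ_hyp)
    (hφgrad : ∀ i, ∀ x : Rn N, φv i x = gradient (Φv i) x)
    (hΦnonneg : ∀ i, ∀ x : Rn N, 0 ≤ Φv i x)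
    (hΦq : ∀ i ∈ ({0, 2} : Set (Fin 4)), ∀ x : Rn N,
      a i * ‖x‖ ^ q ≤ Φv i x ∧ Φv i x ≤ b i * ‖x‖ ^ q)
    (hΦp : ∀ i ∈ ({1, 3} : Set (Fin 4)), ∀ x : Rn N,
      a i * ‖x‖ ^ p ≤ Φv i x ∧ Φv i x ≤ b i * ‖x‖ ^ p)
    -- `F`: `T`-periodic in `t` and continuous in `(x₁,x₂)`
    (hFper : ∀ (t : ℤ) (x₁ x₂ : Rn N), F (t + T) x₁ x₂ = F t x₁ x₂)
    (hFcont : ∀ t : ℤ, Continuous (fun pt : Rn N × Rn N => F t pt.1 pt.2))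
    -- hypothesis (F0)
    (α₁ α₂ : ℝ) (hα₁ : 0 ≤ α₁ ∧ α₁ < q) (hα₂ : 0 ≤ α₂ ∧ α₂ < p)
    (h₁ h₂ lfun : ℤ → ℝ)
    (hh₁ : ∀ t ∈ Finset.Icc (1 : ℤ) (T : ℤ), 0 ≤ h₁ t)
    (hh₂ : ∀ t ∈ Finset.Icc (1 : ℤ) (T : ℤ), 0 ≤ h₂ t)
    (hlf : ∀ t ∈ Finset.Icc (1 : ℤ) (T : ℤ), 0 ≤ lfun t)
    (hF0 : ∀ t ∈ Finset.Icc (1 : ℤ) (T : ℤ), ∀ x₁ x₂ : Rn N,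
      F t x₁ x₂ ≤ h₁ t * ‖x₁‖ ^ α₁ + h₂ t * ‖x₂‖ ^ α₂ + lfun t) :
    (∀ M : ℝ, 0 < M → ∃ R : ℝ, 0 < R ∧
      ∀ u : (ℤ → Rn N) × (ℤ → Rn N), IsPeriodic N T u.1 → IsPeriodic N T u.2 →
        R ≤ supNorm N T hT.le u.1 + supNorm N T hT.le u.2 →
          M ≤ phiFun N T γ Φv F u)
    ∧ ∃ B : ℝ, ∀ u : (ℤ → Rn N) × (ℤ → Rn N), IsPeriodic N T u.1 → IsPeriodic N T u.2 →
        B ≤ phiFun N T γ Φv F u := by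
  classical
  set sE : Finset ℤ := Finset.Icc (1 : ℤ) (T : ℤ) with hsE
  have hne : sE.Nonempty := Finset.nonempty_Icc.mpr (by exact_mod_cast hT.le)
  -- positive lower bounds for γ 2, γ 3 on the window
  set m₂ : ℝ := sE.inf' hne (γ 2) with hm2
  set m₃ : ℝ := sE.inf' hne (γ 3) with hm3
  have hm₂pos : 0 < m₂ := by
    rw [hm2, Finset.lt_inf'_iff]; exact fun t ht => hγpos 2 t ht
  have hm₃pos : 0 < m₃ := by
    rw [hm3, Finset.lt_inf'_iff]; exact fun t ht => hγpos 3 t ht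
  set c₁ : ℝ := m₂ * a 2 with hc1
  set c₂ : ℝ := m₃ * a 3 with hc2
  have hc₁pos : 0 < c₁ := mul_pos hm₂pos (ha 2)
  have hc₂pos : 0 < c₂ := mul_pos hm₃pos (ha 3)
  set H₁ : ℝ := ∑ t ∈ sE, h₁ t with hH1
  set H₂ : ℝ := ∑ t ∈ sE, h₂ t with hH2
  set L : ℝ := ∑ t ∈ sE, lfun t with hL
  have hH₁nn : 0 ≤ H₁ := Finset.sum_nonneg hh₁
  have hH₂nn : 0 ≤ H₂ := Finset.sum_nonneg hh₂
  have hLnn : 0 ≤ L := Finset.sum_nonneg hlf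
  -- nonnegativity of supNorm
  have h1mem : (1 : ℤ) ∈ sE := by
    rw [hsE, Finset.mem_Icc]; exact ⟨le_refl _, by exact_mod_cast hT.le⟩
  have snn : ∀ w : ℤ → Rn N, 0 ≤ supNorm N T hT.le w := fun w =>
    le_trans (norm_nonneg (w 1)) (Finset.le_sup' (fun t => ‖w t‖) h1mem)
  have sle : ∀ (w : ℤ → Rn N), ∀ t ∈ sE, ‖w t‖ ≤ supNorm N T hT.le w := fun w t ht =>
    Finset.le_sup' (fun t => ‖w t‖) ht
  -- key estimate
  have key : ∀ u : (ℤ → Rn N) × (ℤ → Rn N),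
      c₁ * (supNorm N T hT.le u.1) ^ q + c₂ * (supNorm N T hT.le u.2) ^ p
        - H₁ * (supNorm N T hT.le u.1) ^ α₁ - H₂ * (supNorm N T hT.le u.2) ^ α₂ - L
      ≤ phiFun N T γ Φv F u := by
    intro u
    set s₁ : ℝ := supNorm N T hT.le u.1 with hs1
    set s₂ : ℝ := supNorm N T hT.le u.2 with hs2
    obtain ⟨t₁, ht₁, ht₁eq⟩ := Finset.exists_mem_eq_sup'
      (Finset.nonempty_Icc.mpr (by exact_mod_cast hT.le : (1:ℤ) ≤ (T:ℤ)))
      (fun t => ‖u.1 t‖)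
    obtain ⟨t₂, ht₂, ht₂eq⟩ := Finset.exists_mem_eq_sup'
      (Finset.nonempty_Icc.mpr (by exact_mod_cast hT.le : (1:ℤ) ≤ (T:ℤ)))
      (fun t => ‖u.2 t‖)
    have hs1eq : s₁ = ‖u.1 t₁‖ := ht₁eq
    have hs2eq : s₂ = ‖u.2 t₂‖ := ht₂eq
    have hsplit : phiFun N T γ Φv F u =
        (∑ t ∈ sE, (γ 0 t * Φv 0 (fdiff N u.1 t) + γ 1 t * Φv 1 (fdiff N u.2 t)
          + γ 2 t * Φv 2 (u.1 t) + γ 3 t * Φv 3 (u.2 t)))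
        - ∑ t ∈ sE, F t (u.1 t) (u.2 t) := by
      rw [phiFun, ← Finset.sum_sub_distrib]
    -- bound on the F-sum
    have hFsum : ∑ t ∈ sE, F t (u.1 t) (u.2 t) ≤ H₁ * s₁ ^ α₁ + H₂ * s₂ ^ α₂ + L := by
      calc ∑ t ∈ sE, F t (u.1 t) (u.2 t)
          ≤ ∑ t ∈ sE, (h₁ t * s₁ ^ α₁ + h₂ t * s₂ ^ α₂ + lfun t) := by
            apply Finset.sum_le_sum
            intro t ht
            have hb := hF0 t ht (u.1 t) (u.2 t)
            have e1 : h₁ t * ‖u.1 t‖ ^ α₁ ≤ h₁ t * s₁ ^ α₁ :=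
              mul_le_mul_of_nonneg_left
                (Real.rpow_le_rpow (norm_nonneg _) (sle u.1 t ht) hα₁.1) (hh₁ t ht)
            have e2 : h₂ t * ‖u.2 t‖ ^ α₂ ≤ h₂ t * s₂ ^ α₂ :=
              mul_le_mul_of_nonneg_left
                (Real.rpow_le_rpow (norm_nonneg _) (sle u.2 t ht) hα₂.1) (hh₂ t ht)
            linarith
        _ = H₁ * s₁ ^ α₁ + H₂ * s₂ ^ α₂ + L := by
            rw [Finset.sum_add_distrib, Finset.sum_add_distrib,
              ← Finset.sum_mul, ← Finset.sum_mul]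
    -- bound on the main sum
    have hmain : c₁ * s₁ ^ q + c₂ * s₂ ^ p ≤
        ∑ t ∈ sE, (γ 0 t * Φv 0 (fdiff N u.1 t) + γ 1 t * Φv 1 (fdiff N u.2 t)
          + γ 2 t * Φv 2 (u.1 t) + γ 3 t * Φv 3 (u.2 t)) := by
      have step1 : ∑ t ∈ sE, (γ 2 t * Φv 2 (u.1 t) + γ 3 t * Φv 3 (u.2 t)) ≤
          ∑ t ∈ sE, (γ 0 t * Φv 0 (fdiff N u.1 t) + γ 1 t * Φv 1 (fdiff N u.2 t)
            + γ 2 t * Φv 2 (u.1 t) + γ 3 t * Φv 3 (u.2 t)) := by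
        apply Finset.sum_le_sum
        intro t ht
        have e0 : 0 ≤ γ 0 t * Φv 0 (fdiff N u.1 t) :=
          mul_nonneg (hγpos 0 t ht).le (hΦnonneg 0 _)
        have e1 : 0 ≤ γ 1 t * Φv 1 (fdiff N u.2 t) :=
          mul_nonneg (hγpos 1 t ht).le (hΦnonneg 1 _)
        linarith
      have hBsum : c₁ * s₁ ^ q ≤ ∑ t ∈ sE, γ 2 t * Φv 2 (u.1 t) := by
        have hterm : c₁ * s₁ ^ q ≤ γ 2 t₁ * Φv 2 (u.1 t₁) := by
          have hΦ := (hΦq 2 (by simp) (u.1 t₁)).1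
          have := mul_le_mul (Finset.inf'_le (γ 2) ht₁) hΦ
            (mul_nonneg (ha 2).le (Real.rpow_nonneg (norm_nonneg _) _))
            (hγpos 2 t₁ ht₁).le
          calc c₁ * s₁ ^ q = m₂ * (a 2 * ‖u.1 t₁‖ ^ q) := by rw [hs1eq, hc1]; ring
            _ ≤ γ 2 t₁ * Φv 2 (u.1 t₁) := this
        refine le_trans hterm (Finset.single_le_sum (f := fun t => γ 2 t * Φv 2 (u.1 t)) ?_ ht₁)
        exact fun t ht => mul_nonneg (hγpos 2 t ht).le (hΦnonneg 2 _)
      have hCsum : c₂ * s₂ ^ p ≤ ∑ t ∈ sE, γ 3 t * Φv 3 (u.2 t) := by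
        have hterm : c₂ * s₂ ^ p ≤ γ 3 t₂ * Φv 3 (u.2 t₂) := by
          have hΦ := (hΦp 3 (by simp) (u.2 t₂)).1
          have := mul_le_mul (Finset.inf'_le (γ 3) ht₂) hΦ
            (mul_nonneg (ha 3).le (Real.rpow_nonneg (norm_nonneg _) _))
            (hγpos 3 t₂ ht₂).le
          calc c₂ * s₂ ^ p = m₃ * (a 3 * ‖u.2 t₂‖ ^ p) := by rw [hs2eq, hc2]; ring
            _ ≤ γ 3 t₂ * Φv 3 (u.2 t₂) := this
        refine le_trans hterm (Finset.single_le_sum (f := fun t => γ 3 t * Φv 3 (u.2 t)) ?_ ht₂)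
        exact fun t ht => mul_nonneg (hγpos 3 t ht).le (hΦnonneg 3 _)
      calc c₁ * s₁ ^ q + c₂ * s₂ ^ p
          ≤ ∑ t ∈ sE, (γ 2 t * Φv 2 (u.1 t) + γ 3 t * Φv 3 (u.2 t)) := by
            rw [Finset.sum_add_distrib]; exact add_le_add hBsum hCsum
        _ ≤ _ := step1
    rw [hsplit]; linarith
  -- absorb lower-order terms
  obtain ⟨K₁, hK₁nn, hK₁⟩ := halve_rpow hc₁pos hH₁nn hα₁.1 hα₁.2
  obtain ⟨K₂, hK₂nn, hK₂⟩ := halve_rpow hc₂pos hH₂nn hα₂.1 hα₂.2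
  have key2 : ∀ u : (ℤ → Rn N) × (ℤ → Rn N),
      c₁ / 2 * (supNorm N T hT.le u.1) ^ q + c₂ / 2 * (supNorm N T hT.le u.2) ^ p
        - (K₁ + K₂ + L) ≤ phiFun N T γ Φv F u := by
    intro u
    have h1 := hK₁ _ (snn u.1)
    have h2 := hK₂ _ (snn u.2)
    have h3 := key u
    linarith
  constructor
  · -- coercivity
    intro M hM
    set M' : ℝ := M + (K₁ + K₂ + L) with hM'
    have hM'pos : 0 < M' := by positivity
    set d₁ : ℝ := c₁ / 2 with hd1
    set d₂ : ℝ := c₂ / 2 with hd2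
    have hd₁pos : 0 < d₁ := by positivity
    have hd₂pos : 0 < d₂ := by positivity
    refine ⟨2 * max 1 (max ((M' / d₁) ^ q⁻¹) ((M' / d₂) ^ p⁻¹)), by positivity, ?_⟩
    intro u _ _ hs
    set s₁ : ℝ := supNorm N T hT.le u.1 with hs1
    set s₂ : ℝ := supNorm N T hT.le u.2 with hs2
    have hs₁nn : 0 ≤ s₁ := snn u.1
    have hs₂nn : 0 ≤ s₂ := snn u.2
    set X : ℝ := max 1 (max ((M' / d₁) ^ q⁻¹) ((M' / d₂) ^ p⁻¹)) with hX
    have hA : (M' / d₁) ^ q⁻¹ ≤ X := le_trans (le_max_left _ _) (le_max_right _ _)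
    have hB : (M' / d₂) ^ p⁻¹ ≤ X := le_trans (le_max_right _ _) (le_max_right _ _)
    have hgoal : M' ≤ d₁ * s₁ ^ q + d₂ * s₂ ^ p := by
      have hsum : 2 * X ≤ s₁ + s₂ := hs
      have hbranch : X ≤ s₁ ∨ X ≤ s₂ := by
        rcases le_or_gt X s₁ with h | h
        · exact Or.inl h
        · exact Or.inr (by linarith)
      rcases hbranch with h | h
      · have hs1A : (M' / d₁) ^ q⁻¹ ≤ s₁ := le_trans hA h
        have hq : M' / d₁ ≤ s₁ ^ q := by
          have hdnn : 0 ≤ M' / d₁ := div_nonneg hM'pos.le hd₁pos.le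
          calc M' / d₁ = ((M' / d₁) ^ q⁻¹) ^ q :=
                (Real.rpow_inv_rpow hdnn (by linarith)).symm
            _ ≤ s₁ ^ q := Real.rpow_le_rpow (Real.rpow_nonneg hdnn _)
                hs1A (by linarith)
        have h1 : M' ≤ d₁ * s₁ ^ q := by
          have := mul_le_mul_of_nonneg_left hq hd₁pos.le
          calc M' = d₁ * (M' / d₁) := by field_simp
            _ ≤ d₁ * s₁ ^ q := this
        have h2 : 0 ≤ d₂ * s₂ ^ p :=
          mul_nonneg hd₂pos.le (Real.rpow_nonneg hs₂nn p)
        linarith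
      · have hs2B : (M' / d₂) ^ p⁻¹ ≤ s₂ := le_trans hB h
        have hqq : M' / d₂ ≤ s₂ ^ p := by
          have hdnn : 0 ≤ M' / d₂ := div_nonneg hM'pos.le hd₂pos.le
          calc M' / d₂ = ((M' / d₂) ^ p⁻¹) ^ p :=
                (Real.rpow_inv_rpow hdnn (by linarith)).symm
            _ ≤ s₂ ^ p := Real.rpow_le_rpow (Real.rpow_nonneg hdnn _)
                hs2B (by linarith)
        have h1 : M' ≤ d₂ * s₂ ^ p := by
          have := mul_le_mul_of_nonneg_left hqq hd₂pos.le
          calc M' = d₂ * (M' / d₂) := by field_simp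
            _ ≤ d₂ * s₂ ^ p := this
        have h2 : 0 ≤ d₁ * s₁ ^ q :=
          mul_nonneg hd₁pos.le (Real.rpow_nonneg hs₁nn q)
        linarith
    have := key2 u
    rw [← hs1, ← hs2] at this
    linarith
  · -- bounded below
    refine ⟨-(K₁ + K₂ + L), fun u _ _ => ?_⟩
    have h := key2 u
    have e1 : 0 ≤ c₁ / 2 * (supNorm N T hT.le u.1) ^ q :=
      mul_nonneg (by linarith) (Real.rpow_nonneg (snn u.1) q)
    have e2 : 0 ≤ c₂ / 2 * (supNorm N T hT.le u.2) ^ p :=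
      mul_nonneg (by linarith) (Real.rpow_nonneg (snn u.2) p)
    linarith
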